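/- Let α be a type of atoms, let P be a ground program over α in which every rule has a finite positive body, let F ⊆ α be a set of atoms (facts), and let F̂ denote the set of fact rules {a. : a ∈ F}. Let Inst^∞(P,F) denote the least fixpoint of the monotone operator R ↦ Inst(P, Heads(R) ∪ F) on subsets of P, where Inst(P, S) = {r ∈ P : B⁺(r) ⊆ S}. Then AS(P ∪ F̂) = AS(Inst^∞(P,F) ∪ F̂), i.e., the program consisting of the least-fixpoint instantiation together with the facts has the same answer sets as the full ground program with the facts. -/
import Mathlib


structure GroundRule (α : Type*) where
  head : Set α
  posBody : Set α
  negBody : Set α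

namespace GroundRule

variable {α : Type*}

/-- `Heads R` is the set of all head atoms of rules in `R`. -/
def Heads (R : Set (GroundRule α)) : Set α := ⋃ r ∈ R, r.head

/-- `R` body-embeds `r` (written `R ⊢_b r`). -/
def BodyEmbeds (R : Set (GroundRule α)) (r : GroundRule α) : Prop :=
  ∀ a ∈ r.posBody, ∃ r' ∈ R, a ∈ r'.head

/-- `R` embeds `r` (written `R ⊢ r`): either `R` does not body-embed `r`,
or `R` head-embeds `r` (i.e. `r ∈ R`). -/
def Embeds (R : Set (GroundRule α)) (r : GroundRule α) : Prop :=
  ¬ BodyEmbeds R r ∨ r ∈ R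

/-- `E` is an embedding program for the ground program `G`. -/
def IsEmbeddingProgram (G E : Set (GroundRule α)) : Prop :=
  E ⊆ G ∧ ∀ r ∈ G, Embeds E r

/-- The fact rule `a.` for an atom `a`. -/
def factRule (a : α) : GroundRule α := ⟨{a}, ∅, ∅⟩

/-- `factRules F` is the set of fact rules `{a. : a ∈ F}`. -/
def factRules (F : Set α) : Set (GroundRule α) := factRule '' F

/-- The instantiation operator `Inst(P, S) = {r ∈ P : B⁺(r) ⊆ S}`. -/
def Inst (P : Set (GroundRule α)) (S : Set α) : Set (GroundRule α) :=
  {r ∈ P | r.posBody ⊆ S}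

/-- Interpretation `I` satisfies the body of `r`. -/
def SatBody (I : Set α) (r : GroundRule α) : Prop :=
  r.posBody ⊆ I ∧ r.negBody ∩ I = ∅

/-- Interpretation `I` satisfies the rule `r`. -/
def SatRule (I : Set α) (r : GroundRule α) : Prop :=
  ¬ SatBody I r ∨ (r.head ∩ I).Nonempty

/-- `I` is a model of the ground program `G`. -/
def IsModel (I : Set α) (G : Set (GroundRule α)) : Prop :=
  ∀ r ∈ G, SatRule I r

/-- FLP reduct `G^I = {r ∈ G : I ⊨ B(r)}`. -/
def reduct (G : Set (GroundRule α)) (I : Set α) : Set (GroundRule α) :=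
  {r ∈ G | SatBody I r}

/-- `A` is an answer set of `G`: `A` is a model of `G^A` minimal w.r.t. `⊆`. -/
def IsAnswerSet (G : Set (GroundRule α)) (A : Set α) : Prop :=
  IsModel A (reduct G A) ∧ ∀ B, B ⊂ A → ¬ IsModel B (reduct G A)

/-- `AS G` is the set of all answer sets of `G`. -/
def AS (G : Set (GroundRule α)) : Set (Set α) := {A | IsAnswerSet G A}

theorem Heads_mono {R R' : Set (GroundRule α)} (h : R ⊆ R') : Heads R ⊆ Heads R' := by
  intro a ha
  simp only [Heads, Set.mem_iUnion, exists_prop] at ha ⊢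
  obtain ⟨r, hr, har⟩ := ha
  exact ⟨r, h hr, har⟩

/-- The monotone operator `R ↦ Inst(P, Heads(R) ∪ F)`. -/
def InstOp (P : Set (GroundRule α)) (F : Set α) :
    Set (GroundRule α) →o Set (GroundRule α) where
  toFun R := Inst P (Heads R ∪ F)
  monotone' := fun _ _ h _ hr =>
    ⟨hr.1, hr.2.trans (Set.union_subset_union_left F (Heads_mono h))⟩

/-- `Inst^∞(P, F)`: the least fixpoint of `R ↦ Inst(P, Heads(R) ∪ F)`. -/
def InstInf (P : Set (GroundRule α)) (F : Set α) : Set (GroundRule α) :=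
  OrderHom.lfp (InstOp P F)

end GroundRule

open GroundRule

/-- `AS(P ∪ F̂) = AS(Inst^∞(P,F) ∪ F̂)`. -/
theorem answerSets_instInf {α : Type*} (P : Set (GroundRule α)) (F : Set α)
    (hfin : ∀ r ∈ P, r.posBody.Finite) :
    AS (P ∪ factRules F) = AS (InstInf P F ∪ factRules F) := by
  classical
  set I := InstInf P F with hIdef
  have hfix : Inst P (Heads I ∪ F) = I := OrderHom.map_lfp (InstOp P F)
  have hIP : I ⊆ P := fun r hr => by
    rw [← hfix] at hr; exact hr.1
  set S := Heads I ∪ F with hSdef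
  -- any rule of P with positive body in S belongs to I
  have hInst : ∀ r ∈ P, r.posBody ⊆ S → r ∈ I := fun r hrP hrS => by
    rw [← hfix]; exact ⟨hrP, hrS⟩
  have hHeadI : ∀ r ∈ I, r.head ⊆ S := fun r hr a ha =>
    Or.inl (by simp only [Heads, Set.mem_iUnion, exists_prop]; exact ⟨r, hr, ha⟩)
  -- every answer set of a subprogram of P ∪ F̂ is contained in S
  have sub : ∀ G : Set (GroundRule α), G ⊆ P ∪ factRules F →
      ∀ A : Set α, IsAnswerSet G A → A ⊆ S := by
    intro G hG A hA
    have hmodel : IsModel (A ∩ S) (reduct G A) := by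
      intro r hr
      by_cases hb : SatBody (A ∩ S) r
      · right
        have hposS : r.posBody ⊆ S := hb.1.trans Set.inter_subset_right
        have hheadA : (r.head ∩ A).Nonempty := by
          rcases hA.1 r hr with h | h
          · exact absurd hr.2 h
          · exact h
        have hheadS : r.head ⊆ S := by
          rcases hG hr.1 with hP | hF
          · exact hHeadI r (hInst r hP hposS)
          · rcases hF with ⟨a, haF, rfl⟩
            intro x hx
            rcases hx with rfl
            exact Or.inr haF
        obtain ⟨a, haH, haA⟩ := hheadA
        exact ⟨a, haH, haA, hheadS haH⟩
      · exact Or.inl hb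
    have hnot := hA.2 (A ∩ S)
    by_contra hns
    have hss : A ∩ S ⊂ A := by
      constructor
      · exact Set.inter_subset_left
      · intro hle
        exact hns fun a ha => ((hle ha) : a ∈ A ∩ S).2
    exact hnot hss hmodel
  -- for A ⊆ S, the two reducts coincide
  have hred : ∀ A : Set α, A ⊆ S →
      reduct (P ∪ factRules F) A = reduct (I ∪ factRules F) A := by
    intro A hAS
    ext r
    constructor
    · rintro ⟨hr, hb⟩
      refine ⟨?_, hb⟩
      rcases hr with hP | hF
      · exact Or.inl (hInst r hP (hb.1.trans hAS))
      · exact Or.inr hF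
    · rintro ⟨hr, hb⟩
      refine ⟨?_, hb⟩
      rcases hr with hI | hF
      · exact Or.inl (hIP hI)
      · exact Or.inr hF
  ext A
  constructor
  · intro hA
    have hAS : A ⊆ S := sub _ (le_refl _) A hA
    exact ⟨by rw [← hred A hAS]; exact hA.1, fun B hB => by rw [← hred A hAS]; exact hA.2 B hB⟩
  · intro hA
    have hAS : A ⊆ S :=
      sub _ (Set.union_subset_union_left _ hIP) A hA
    exact ⟨by rw [hred A hAS]; exact hA.1, fun B hB => by rw [hred A hAS]; exact hA.2 B hB⟩
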